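/- Let B⟨X⟩ be the free product of a unital ℂ-algebra B with ℂ⟨X⟩. The sequence 0 → B + [B⟨X⟩, B⟨X⟩] → B⟨X⟩ →^{δ_{X:B}} B⟨X⟩ →^{Θ} B⟨X⟩ is exact: the kernel of δ_{X:B} equals B + [B⟨X⟩, B⟨X⟩], and the image of δ_{X:B} equals the kernel of Θ. -/

import Mathlib

open scoped TensorProduct

noncomputable section

/-- `(A, ι, X)` is the free product `B *_ℂ ℂ⟨X⟩`, characterized by its universal
property: every algebra map `φ : B → C` together with a choice of element `x ∈ C`
extends uniquely to an algebra map `A → C` sending `X` to `x`. -/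
def IsFreeProduct {B A : Type} [Ring B] [Algebra ℂ B] [Ring A] [Algebra ℂ A]
    (ι : B →ₐ[ℂ] A) (X : A) : Prop :=
  ∀ (C : Type) [Ring C] [Algebra ℂ C], ∀ (φ : B →ₐ[ℂ] C) (x : C),
    ∃! ψ : A →ₐ[ℂ] C, ψ.comp ι = φ ∧ ψ X = x

/-- the monomial `b₀ X b₁ ⋯ X bₙ`, where `bs = [b₁, …, bₙ]`. -/
def mono {B A : Type} [Ring B] [Algebra ℂ B] [Ring A] [Algebra ℂ A]
    (ι : B →ₐ[ℂ] A) (X : A) (b0 : B) (bs : List B) : A :=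
  ι b0 * (bs.map (fun b => X * ι b)).prod

/-- the cyclic derivative `δ = μ ∘ σ ∘ ∂` associated with a difference quotient `D`. -/
def cyclicDer {A : Type} [Ring A] [Algebra ℂ A] (D : A →ₗ[ℂ] A ⊗[ℂ] A) : A →ₗ[ℂ] A :=
  (LinearMap.mul' ℂ A) ∘ₗ (TensorProduct.comm ℂ A A).toLinearMap ∘ₗ D

/-- the operation `u # b`, determined by `(a ⊗ c) # b = a b c`. -/
def sharp {A : Type} [Ring A] [Algebra ℂ A] (u : A ⊗[ℂ] A) (b : A) : A :=
  LinearMap.mul' ℂ A (u * (b ⊗ₜ[ℂ] (1 : A)))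

/-- the divergence operator `∂* : u ↦ u # X`, i.e. `(a ⊗ c) ↦ a X c`. -/
def divg {A : Type} [Ring A] [Algebra ℂ A] (X : A) : A ⊗[ℂ] A →ₗ[ℂ] A :=
  (LinearMap.mul' ℂ A) ∘ₗ (LinearMap.mulRight ℂ (X ⊗ₜ[ℂ] (1 : A)))

/-- the number operator `N = ∂* ∘ ∂`. -/
def numOp {A : Type} [Ring A] [Algebra ℂ A] (X : A) (D : A →ₗ[ℂ] A ⊗[ℂ] A) :
    A →ₗ[ℂ] A :=
  divg X ∘ₗ D

namespace CDExact

variable {B A : Type} [Ring B] [Algebra ℂ B] [Ring A] [Algebra ℂ A]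
    (ι : B →ₐ[ℂ] A) (X : A)

lemma mono_nil (b : B) : mono ι X b [] = ι b := by simp [mono]

lemma mono_cons (b c : B) (l : List B) :
    mono ι X b (c :: l) = ι b * (X * mono ι X c l) := by
  simp [mono, mul_assoc]

lemma mono_append_cons (b c : B) (l₁ l₂ : List B) :
    mono ι X b (l₁ ++ c :: l₂) = mono ι X b l₁ * (X * mono ι X c l₂) := by
  simp [mono, mul_assoc]

lemma X_mul_mono (c : B) (l : List B) : X * mono ι X c l = mono ι X 1 (c :: l) := by
  simp [mono_cons]

lemma one_mono : mono ι X 1 [] = 1 := by simp [mono]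

lemma X_mono : mono ι X 1 [1] = X := by simp [mono]

lemma mono_mul_C (l : List B) (c b : B) :
    ∃ c' l', l'.length = l.length ∧ mono ι X c l * ι b = mono ι X c' l' := by
  rcases l.eq_nil_or_concat with rfl | ⟨t, d, rfl⟩
  · exact ⟨c * b, [], rfl, by simp [mono_nil]⟩
  · refine ⟨c, t ++ [d * b], by simp, ?_⟩
    rw [List.concat_eq_append, mono_append_cons, mono_append_cons, mono_nil, mono_nil, map_mul]
    simp [mul_assoc]

lemma mono_mul_mono (l : List B) (b c : B) (l' : List B) :
    ∃ b'' l'', mono ι X b l * mono ι X c l' = mono ι X b'' l'' := by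
  rcases l.eq_nil_or_concat with rfl | ⟨t, d, rfl⟩
  · exact ⟨b * c, l', by simp [mono, mul_assoc]⟩
  · refine ⟨b, t ++ (d * c) :: l', ?_⟩
    rw [List.concat_eq_append, mono_append_cons, mono_append_cons, mono_nil]
    simp [mono, mul_assoc]

/-- the set of monomials -/
def MSet : Set A := {a : A | ∃ b l, a = mono ι X b l}

lemma mspan (hfree : IsFreeProduct ι X) : Submodule.span ℂ (MSet ι X) = ⊤ := by
  set p := Submodule.span ℂ (MSet ι X) with hp
  have h1 : (1 : A) ∈ p := Submodule.subset_span ⟨1, [], (one_mono ι X).symm⟩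
  have hmul : ∀ x y : A, x ∈ p → y ∈ p → x * y ∈ p := by
    intro x y hx hy
    have : p * p ≤ p := by
      rw [hp, Submodule.span_mul_span]
      rw [Submodule.span_le]
      rintro z hz
      rcases Set.mem_mul.1 hz with ⟨u, hu, v, hv, rfl⟩
      rcases hu with ⟨b, l, rfl⟩
      rcases hv with ⟨c, l', rfl⟩
      rcases mono_mul_mono ι X l b c l' with ⟨b'', l'', h⟩
      exact Submodule.subset_span ⟨b'', l'', h⟩
    exact this (Submodule.mul_mem_mul hx hy)
  set S : Subalgebra ℂ A := p.toSubalgebra h1 hmul with hS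
  have hB : ∀ b : B, ι b ∈ S := fun b => Submodule.subset_span ⟨b, [], (mono_nil ι X b).symm⟩
  have hX : X ∈ S := Submodule.subset_span ⟨1, [1], (X_mono ι X).symm⟩
  obtain ⟨ψ, ⟨hψι, hψX⟩, -⟩ := hfree S (ι.codRestrict S hB) ⟨X, hX⟩
  obtain ⟨e, -, hu⟩ := hfree A ι X
  have h2 : S.val.comp ψ = AlgHom.id ℂ A := by
    have ha := hu (S.val.comp ψ) ⟨by
        ext b
        have h3 := AlgHom.congr_fun hψι b
        simp only [AlgHom.comp_apply] at h3
        simp only [AlgHom.comp_apply, h3]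
        rfl,
      by simp [AlgHom.comp_apply, hψX]⟩
    have hb := hu (AlgHom.id ℂ A) ⟨by ext b; simp, rfl⟩
    exact ha.trans hb.symm
  rw [eq_top_iff]
  intro a _
  have : a = S.val (ψ a) := by
    conv_lhs => rw [← AlgHom.id_apply (R := ℂ) a, ← h2]
    rfl
  rw [this]
  exact (ψ a).2

lemma ext_mono (hfree : IsFreeProduct ι X) (f g : A →ₗ[ℂ] A)
    (h : ∀ b l, f (mono ι X b l) = g (mono ι X b l)) : f = g := by
  refine LinearMap.ext_on (mspan ι X hfree) ?_
  rintro x ⟨b, l, rfl⟩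
  exact h b l


section Grading

variable (Ψ : A →ₐ[ℂ] Polynomial A)

lemma X_mul_CP (m : A) (n : ℕ) :
    (Polynomial.X : Polynomial A) * (Polynomial.C m * Polynomial.X ^ n) =
      Polynomial.C m * Polynomial.X ^ (n + 1) := by
  rw [← mul_assoc, Polynomial.X_mul_C, mul_assoc, ← pow_succ']

lemma psi_mono (hΨb : ∀ b : B, Ψ (ι b) = Polynomial.C (ι b))
    (hΨX : Ψ X = Polynomial.C X * Polynomial.X) :
    ∀ (l : List B) (b : B),
      Ψ (mono ι X b l) = Polynomial.C (mono ι X b l) * Polynomial.X ^ l.length := by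
  intro l
  induction l with
  | nil => intro b; simp [mono_nil, hΨb]
  | cons c t IH =>
    intro b
    rw [mono_cons, map_mul, map_mul, hΨb, hΨX, IH c,
      mul_assoc (Polynomial.C X), X_mul_CP, ← mul_assoc, ← mul_assoc, ← map_mul, ← map_mul,
      List.length_cons, mul_assoc (ι b)]

/-- the degree-`n` projection -/
def P (n : ℕ) : A →ₗ[ℂ] A where
  toFun := fun a => (Ψ a).coeff n
  map_add' := by intro x y; simp
  map_smul' := by intro c x; simp [Polynomial.coeff_smul]

lemma P_mono (hΨb : ∀ b : B, Ψ (ι b) = Polynomial.C (ι b))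
    (hΨX : Ψ X = Polynomial.C X * Polynomial.X) (n : ℕ) (b : B) (l : List B) :
    P Ψ n (mono ι X b l) = if l.length = n then mono ι X b l else 0 := by
  simp only [P, LinearMap.coe_mk, AddHom.coe_mk]
  rw [psi_mono ι X Ψ hΨb hΨX, Polynomial.coeff_C_mul, Polynomial.coeff_X_pow]
  rcases eq_or_ne l.length n with h | h
  · simp [h]
  · simp [h, Ne.symm h]

lemma decomp (hΨb : ∀ b : B, Ψ (ι b) = Polynomial.C (ι b))
    (hΨX : Ψ X = Polynomial.C X * Polynomial.X) (hfree : IsFreeProduct ι X) :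
    ∀ a : A, ∑ n ∈ (Ψ a).support, P Ψ n a = a := by
  have hE : ∀ a : A, (Ψ a).eval 1 = a := by
    set E : A →ₗ[ℂ] A :=
      { toFun := fun a => (Ψ a).eval 1
        map_add' := by intro x y; simp
        map_smul' := by intro c x; simp } with hEdef
    have : E = LinearMap.id := by
      refine ext_mono ι X hfree _ _ ?_
      intro b l
      simp only [hEdef, LinearMap.coe_mk, AddHom.coe_mk, LinearMap.id_apply]
      rw [psi_mono ι X Ψ hΨb hΨX, Polynomial.C_mul_X_pow_eq_monomial,
        Polynomial.eval_monomial, one_pow, mul_one]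
    intro a
    exact congrArg (fun f => f a) this
  intro a
  conv_rhs => rw [← hE a]
  rw [Polynomial.eval_eq_sum, Polynomial.sum]
  refine Finset.sum_congr rfl ?_
  intro n _
  simp [P]

end Grading

section Dlemmas

/-- head-form of a monomial tail -/
def mhead : List B → A
  | [] => 1
  | (c :: t) => mono ι X c t

variable (D : A →ₗ[ℂ] A ⊗[ℂ] A)

lemma D_mono (hD : ∀ p q : A, D (p * q) = (p ⊗ₜ[ℂ] (1 : A)) * D q + D p * ((1 : A) ⊗ₜ[ℂ] q))
    (hDX : D X = (1 : A) ⊗ₜ[ℂ] (1 : A)) (hDB : ∀ b : B, D (ι b) = 0) :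
    ∀ (l : List B) (b : B), D (mono ι X b l) =
      ∑ i ∈ Finset.range l.length, mono ι X b (l.take i) ⊗ₜ[ℂ] mhead ι X (l.drop i) := by
  intro l
  induction l with
  | nil => intro b; simp [mono_nil, hDB]
  | cons c t IH =>
    intro b
    rw [mono_cons, hD, hDB, zero_mul, add_zero, hD, hDX, IH c]
    rw [mul_add, Finset.mul_sum, Finset.mul_sum, List.length_cons, Finset.sum_range_succ']
    congr 1
    · refine Finset.sum_congr rfl fun i hi => ?_
      simp [Algebra.TensorProduct.tmul_mul_tmul, mono_cons, mul_assoc]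
    · simp [Algebra.TensorProduct.tmul_mul_tmul, mono_nil, mhead]

lemma cyclicDer_eq (a : A) :
    cyclicDer D a = LinearMap.mul' ℂ A ((TensorProduct.comm ℂ A A) (D a)) := rfl

lemma delta_mono (hD : ∀ p q : A, D (p * q) = (p ⊗ₜ[ℂ] (1 : A)) * D q + D p * ((1 : A) ⊗ₜ[ℂ] q))
    (hDX : D X = (1 : A) ⊗ₜ[ℂ] (1 : A)) (hDB : ∀ b : B, D (ι b) = 0) (l : List B) (b : B) :
    cyclicDer D (mono ι X b l) =
      ∑ i ∈ Finset.range l.length, mhead ι X (l.drop i) * mono ι X b (l.take i) := by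
  rw [cyclicDer_eq, D_mono ι X D hD hDX hDB l b, map_sum, map_sum]
  simp [TensorProduct.comm_tmul, LinearMap.mul'_apply]

lemma N_mono (hD : ∀ p q : A, D (p * q) = (p ⊗ₜ[ℂ] (1 : A)) * D q + D p * ((1 : A) ⊗ₜ[ℂ] q))
    (hDX : D X = (1 : A) ⊗ₜ[ℂ] (1 : A)) (hDB : ∀ b : B, D (ι b) = 0) (l : List B) (b : B) :
    numOp X D (mono ι X b l) = l.length • mono ι X b l := by
  have h : numOp X D (mono ι X b l) =
      ∑ i ∈ Finset.range l.length,
        mono ι X b (l.take i) * X * mhead ι X (l.drop i) := by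
    simp only [numOp, LinearMap.comp_apply]
    rw [D_mono ι X D hD hDX hDB l b, map_sum]
    refine Finset.sum_congr rfl fun i _ => ?_
    simp [divg, Algebra.TensorProduct.tmul_mul_tmul, LinearMap.mul'_apply]
  rw [h]
  rw [Finset.sum_congr rfl (fun i hi => ?_), Finset.sum_const, Finset.card_range]
  have hi' : i < l.length := Finset.mem_range.1 hi
  calc mono ι X b (l.take i) * X * mhead ι X (l.drop i)
      = mono ι X b (l.take i) * (X * mono ι X (l[i]) (l.drop (i + 1))) := by
        rw [List.drop_eq_getElem_cons hi']; simp [mhead, mul_assoc]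
    _ = mono ι X b (l.take i ++ (l[i]) :: l.drop (i + 1)) := (mono_append_cons ι X _ _ _ _).symm
    _ = mono ι X b l := by rw [← List.drop_eq_getElem_cons hi', List.take_append_drop]

variable (ρ : A →ₗ[ℂ] A)

lemma rho_cons (hρ : ∀ (b0 b1 : B) (bs : List B),
      ρ (mono ι X b0 (b1 :: bs)) = mono ι X b1 bs * X * ι b0) (b c : B) (l : List B) :
    ρ (mono ι X b (c :: l)) = mono ι X c (l ++ [b]) := by
  rw [hρ, mono_append_cons, mono_nil, mul_assoc]

lemma rho_pow_rot (hρ : ∀ (b0 b1 : B) (bs : List B),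
      ρ (mono ι X b0 (b1 :: bs)) = mono ι X b1 bs * X * ι b0) :
    ∀ (l₁ : List B) (b₀ b : B) (l₂ : List B),
      (ρ ^ (l₁.length + 1)) (mono ι X b₀ (l₁ ++ b :: l₂)) = mono ι X b (l₂ ++ b₀ :: l₁) := by
  intro l₁
  induction l₁ with
  | nil =>
    intro b₀ b l₂
    simp only [List.length_nil, zero_add, pow_one]
    simpa using rho_cons ι X ρ hρ b₀ b l₂
  | cons c t IH =>
    intro b₀ b l₂
    rw [show ((c :: t).length + 1) = (t.length + 1) + 1 by simp, pow_succ,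
      Module.End.mul_apply, List.cons_append, rho_cons ι X ρ hρ]
    rw [show (t ++ b :: l₂) ++ [b₀] = t ++ b :: (l₂ ++ [b₀]) by simp, IH c b (l₂ ++ [b₀])]
    simp

lemma rho_pow_period (hρ0 : ∀ b0 : B, ρ (mono ι X b0 []) = mono ι X b0 [])
    (hρ : ∀ (b0 b1 : B) (bs : List B),
      ρ (mono ι X b0 (b1 :: bs)) = mono ι X b1 bs * X * ι b0) (l : List B) (b : B) :
    (ρ ^ (l.length + 1)) (mono ι X b l) = mono ι X b l := by
  cases l with
  | nil => simp only [List.length_nil, zero_add, pow_one]; exact hρ0 b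
  | cons c t =>
    rw [show ((c :: t).length + 1) = (t.length + 1) + 1 by simp, pow_succ,
      Module.End.mul_apply, rho_cons ι X ρ hρ]
    simpa using rho_pow_rot ι X ρ hρ t c b []

lemma delta_X_mono (hD : ∀ p q : A, D (p * q) = (p ⊗ₜ[ℂ] (1 : A)) * D q + D p * ((1 : A) ⊗ₜ[ℂ] q))
    (hDX : D X = (1 : A) ⊗ₜ[ℂ] (1 : A)) (hDB : ∀ b : B, D (ι b) = 0)
    (hρ : ∀ (b0 b1 : B) (bs : List B),
      ρ (mono ι X b0 (b1 :: bs)) = mono ι X b1 bs * X * ι b0) (l : List B) (b : B) :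
    cyclicDer D (mono ι X 1 (b :: l)) =
      ∑ i ∈ Finset.range (l.length + 1), (ρ ^ i) (mono ι X b l) := by
  rw [delta_mono ι X D hD hDX hDB (b :: l) 1, List.length_cons,
    Finset.sum_range_succ', Finset.sum_range_succ']
  congr 1
  · refine Finset.sum_congr rfl fun i hi => ?_
    have hi' : i < l.length := Finset.mem_range.1 hi
    have hr := rho_pow_rot ι X ρ hρ (l.take i) b (l[i]) (l.drop (i + 1))
    rw [List.length_take, min_eq_left hi'.le,
      ← List.drop_eq_getElem_cons hi', List.take_append_drop] at hr
    rw [hr, List.drop_succ_cons, List.take_succ_cons, List.drop_eq_getElem_cons hi',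
      ← X_mul_mono]
    show mono ι X (l[i]) (l.drop (i + 1)) * (X * mono ι X b (l.take i)) = _
    rw [← mono_append_cons]
  · simp [mhead, one_mono, Module.End.one_apply]

end Dlemmas

section Main

variable (D : A →ₗ[ℂ] A ⊗[ℂ] A) (ρ : A →ₗ[ℂ] A) (Ψ : A →ₐ[ℂ] Polynomial A)

lemma delta_mul_comm
    (hD : ∀ p q : A, D (p * q) = (p ⊗ₜ[ℂ] (1 : A)) * D q + D p * ((1 : A) ⊗ₜ[ℂ] q))
    (p q : A) : cyclicDer D (p * q) = cyclicDer D (q * p) := by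
  have key : ∀ (x : A) (u : A ⊗[ℂ] A),
      LinearMap.mul' ℂ A ((TensorProduct.comm ℂ A A) (u * ((1 : A) ⊗ₜ[ℂ] x))) =
      LinearMap.mul' ℂ A ((TensorProduct.comm ℂ A A) ((x ⊗ₜ[ℂ] (1 : A)) * u)) := by
    intro x u
    induction u using TensorProduct.induction_on with
    | zero => simp
    | tmul a c =>
      simp [Algebra.TensorProduct.tmul_mul_tmul, TensorProduct.comm_tmul,
        LinearMap.mul'_apply, mul_assoc]
    | add u v hu hv =>
      simp only [add_mul, mul_add, map_add, hu, hv]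
  rw [cyclicDer_eq, cyclicDer_eq, hD p q, hD q p, map_add, map_add, map_add, map_add,
    key q (D p), key p (D q)]
  exact add_comm _ _

lemma N_sub_mem (a : A) :
    numOp X D a - X * cyclicDer D a ∈
      Submodule.span ℂ {x : A | ∃ p q : A, x = p * q - q * p} := by
  have key : ∀ u : A ⊗[ℂ] A,
      divg X u - X * LinearMap.mul' ℂ A ((TensorProduct.comm ℂ A A) u) ∈
        Submodule.span ℂ {x : A | ∃ p q : A, x = p * q - q * p} := by
    intro u
    induction u using TensorProduct.induction_on with
    | zero => simpa using Submodule.zero_mem _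
    | tmul a c =>
      refine Submodule.subset_span ⟨a, X * c, ?_⟩
      simp [divg, LinearMap.mul'_apply, TensorProduct.comm_tmul,
        Algebra.TensorProduct.tmul_mul_tmul, mul_assoc]
    | add u v hu hv =>
      rw [map_add, map_add, map_add, mul_add, add_sub_add_comm]
      exact add_mem hu hv
  have h := key (D a)
  simpa [numOp, cyclicDer] using h

lemma rho_sum (w : A) (k : ℕ) (hper : (ρ ^ (k + 1)) w = w) :
    ρ (∑ i ∈ Finset.range (k + 1), (ρ ^ i) w) = ∑ i ∈ Finset.range (k + 1), (ρ ^ i) w := by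
  rw [map_sum]
  have h1 : ∀ i, ρ ((ρ ^ i) w) = (ρ ^ (i + 1)) w := by
    intro i
    rw [pow_succ', Module.End.mul_apply]
  calc ∑ i ∈ Finset.range (k + 1), ρ ((ρ ^ i) w)
      = ∑ i ∈ Finset.range (k + 1), (ρ ^ (i + 1)) w := by simp [h1]
    _ = ∑ i ∈ Finset.range (k + 1), (ρ ^ i) w := by
        have h2 := (Finset.sum_range_succ' (fun i => (ρ ^ i) w) (k + 1)).symm.trans
          (Finset.sum_range_succ (fun i => (ρ ^ i) w) (k + 1))
        simp only [pow_zero, Module.End.one_apply, hper] at h2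
        exact add_right_cancel h2

lemma rho_delta (hfree : IsFreeProduct ι X)
    (hD : ∀ p q : A, D (p * q) = (p ⊗ₜ[ℂ] (1 : A)) * D q + D p * ((1 : A) ⊗ₜ[ℂ] q))
    (hDX : D X = (1 : A) ⊗ₜ[ℂ] (1 : A)) (hDB : ∀ b : B, D (ι b) = 0)
    (hρ0 : ∀ b0 : B, ρ (mono ι X b0 []) = mono ι X b0 [])
    (hρ : ∀ (b0 b1 : B) (bs : List B),
      ρ (mono ι X b0 (b1 :: bs)) = mono ι X b1 bs * X * ι b0)
    (a : A) : ρ (cyclicDer D a) = cyclicDer D a := by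
  have h : ρ ∘ₗ cyclicDer D = cyclicDer D := by
    refine ext_mono ι X hfree _ _ ?_
    intro b l
    simp only [LinearMap.comp_apply]
    cases l with
    | nil =>
      have h0 : cyclicDer D (mono ι X b []) = 0 := by
        rw [cyclicDer_eq, mono_nil, hDB b]; simp
      rw [h0]; simp
    | cons c t =>
      obtain ⟨c', l', hlen, hmul⟩ := mono_mul_C ι X t c b
      have h2 : cyclicDer D (mono ι X b (c :: t)) = cyclicDer D (mono ι X 1 (c' :: l')) := by
        rw [mono_cons, delta_mul_comm D hD (ι b) (X * mono ι X c t), mul_assoc, hmul,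
          X_mul_mono]
      rw [h2, delta_X_mono ι X D ρ hD hDX hDB hρ l' c']
      exact rho_sum ρ _ _ (rho_pow_period ι X ρ hρ0 hρ l' c')
  exact LinearMap.congr_fun h a

lemma P0_range (hΨb : ∀ b : B, Ψ (ι b) = Polynomial.C (ι b))
    (hΨX : Ψ X = Polynomial.C X * Polynomial.X) (hfree : IsFreeProduct ι X) (a : A) :
    P Ψ 0 a ∈ LinearMap.range ι.toLinearMap := by
  have ha : a ∈ Submodule.span ℂ (MSet ι X) := by rw [mspan ι X hfree]; trivial
  refine Submodule.span_induction ?_ ?_ ?_ ?_ ha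
  · rintro x ⟨b, l, rfl⟩
    rw [P_mono ι X Ψ hΨb hΨX]
    cases l with
    | nil => simpa [mono_nil] using ⟨b, rfl⟩
    | cons c t => simp
  · simpa using Submodule.zero_mem _
  · intro x y _ _ hx hy; rw [map_add]; exact add_mem hx hy
  · intro c x _ hx; rw [map_smul]; exact Submodule.smul_mem _ c hx

lemma P_comm_stable (hΨb : ∀ b : B, Ψ (ι b) = Polynomial.C (ι b))
    (hΨX : Ψ X = Polynomial.C X * Polynomial.X) (n : ℕ) (a : A)
    (ha : a ∈ Submodule.span ℂ {x : A | ∃ p q : A, x = p * q - q * p}) :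
    P Ψ n a ∈ Submodule.span ℂ {x : A | ∃ p q : A, x = p * q - q * p} := by
  refine Submodule.span_induction ?_ ?_ ?_ ?_ ha
  · rintro x ⟨p, q, rfl⟩
    rw [map_sub]
    have hpq : P Ψ n (p * q) = ∑ x ∈ Finset.HasAntidiagonal.antidiagonal n, P Ψ x.1 p * P Ψ x.2 q := by
      simp [P, Polynomial.coeff_mul]
    have hqp : P Ψ n (q * p) = ∑ x ∈ Finset.HasAntidiagonal.antidiagonal n, P Ψ x.2 q * P Ψ x.1 p := by
      have hs := Finset.Nat.sum_antidiagonal_swap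
        (n := n) (f := fun x : ℕ × ℕ => (Ψ q).coeff x.2 * (Ψ p).coeff x.1)
      simp only [Prod.fst_swap, Prod.snd_swap] at hs
      simp [P, Polynomial.coeff_mul]
      exact hs
    rw [hpq, hqp, ← Finset.sum_sub_distrib]
    exact Submodule.sum_mem _ fun x _ => Submodule.subset_span ⟨_, _, rfl⟩
  · simpa using Submodule.zero_mem _
  · intro x y _ _ hx hy; rw [map_add]; exact add_mem hx hy
  · intro c x _ hx; rw [map_smul]; exact Submodule.smul_mem _ c hx

lemma PN (hΨb : ∀ b : B, Ψ (ι b) = Polynomial.C (ι b))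
    (hΨX : Ψ X = Polynomial.C X * Polynomial.X) (hfree : IsFreeProduct ι X)
    (hD : ∀ p q : A, D (p * q) = (p ⊗ₜ[ℂ] (1 : A)) * D q + D p * ((1 : A) ⊗ₜ[ℂ] q))
    (hDX : D X = (1 : A) ⊗ₜ[ℂ] (1 : A)) (hDB : ∀ b : B, D (ι b) = 0) (n : ℕ) (a : A) :
    P Ψ n (numOp X D a) = (n : ℂ) • P Ψ n a := by
  have h : (P Ψ n) ∘ₗ numOp X D = (n : ℂ) • P Ψ n := by
    refine ext_mono ι X hfree _ _ ?_
    intro b l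
    simp only [LinearMap.comp_apply, LinearMap.smul_apply]
    rw [N_mono ι X D hD hDX hDB l b, map_nsmul, P_mono ι X Ψ hΨb hΨX]
    rcases eq_or_ne l.length n with h | h
    · subst h; simp [Nat.cast_smul_eq_nsmul]
    · simp [h]
  exact LinearMap.congr_fun h a

lemma P_rho (hΨb : ∀ b : B, Ψ (ι b) = Polynomial.C (ι b))
    (hΨX : Ψ X = Polynomial.C X * Polynomial.X) (hfree : IsFreeProduct ι X)
    (hρ0 : ∀ b0 : B, ρ (mono ι X b0 []) = mono ι X b0 [])
    (hρ : ∀ (b0 b1 : B) (bs : List B),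
      ρ (mono ι X b0 (b1 :: bs)) = mono ι X b1 bs * X * ι b0)
    (n : ℕ) (a : A) : P Ψ n (ρ a) = ρ (P Ψ n a) := by
  have h : (P Ψ n) ∘ₗ ρ = ρ ∘ₗ (P Ψ n) := by
    refine ext_mono ι X hfree _ _ ?_
    intro b l
    simp only [LinearMap.comp_apply]
    cases l with
    | nil =>
      rw [hρ0 b, P_mono ι X Ψ hΨb hΨX]
      rcases eq_or_ne 0 n with h | h
      · simp [← h, hρ0 b]
      · simp [h]
    | cons c t =>
      rw [rho_cons ι X ρ hρ, P_mono ι X Ψ hΨb hΨX, P_mono ι X Ψ hΨb hΨX]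
      rcases eq_or_ne (t.length + 1) n with h | h
      · simp [h, rho_cons ι X ρ hρ]
      · simp [h]
  exact LinearMap.congr_fun h a

lemma R2n (hΨb : ∀ b : B, Ψ (ι b) = Polynomial.C (ι b))
    (hΨX : Ψ X = Polynomial.C X * Polynomial.X) (hfree : IsFreeProduct ι X)
    (hD : ∀ p q : A, D (p * q) = (p ⊗ₜ[ℂ] (1 : A)) * D q + D p * ((1 : A) ⊗ₜ[ℂ] q))
    (hDX : D X = (1 : A) ⊗ₜ[ℂ] (1 : A)) (hDB : ∀ b : B, D (ι b) = 0)
    (hρ : ∀ (b0 b1 : B) (bs : List B),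
      ρ (mono ι X b0 (b1 :: bs)) = mono ι X b1 bs * X * ι b0)
    (n : ℕ) (a : A) :
    cyclicDer D (X * P Ψ n a) = ∑ i ∈ Finset.range (n + 1), (ρ ^ i) (P Ψ n a) := by
  have h : (cyclicDer D) ∘ₗ (LinearMap.mulLeft ℂ X) ∘ₗ (P Ψ n) =
      (∑ i ∈ Finset.range (n + 1), ρ ^ i) ∘ₗ (P Ψ n) := by
    refine ext_mono ι X hfree _ _ ?_
    intro b l
    simp only [LinearMap.comp_apply, LinearMap.mulLeft_apply]
    rw [P_mono ι X Ψ hΨb hΨX]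
    rcases eq_or_ne l.length n with h | h
    · subst h
      simp only [eq_self_iff_true, if_true]
      rw [X_mul_mono, delta_X_mono ι X D ρ hD hDX hDB hρ l b, LinearMap.sum_apply]
    · simp [h]
  have := LinearMap.congr_fun h a
  simpa [LinearMap.sum_apply] using this

end Main

end CDExact

open CDExact in
/-- Exactness of `0 → B + [B⟨X⟩,B⟨X⟩] → B⟨X⟩ →^{δ} B⟨X⟩ →^{Θ} B⟨X⟩`:
`ker δ_{X:B} = B + [B⟨X⟩,B⟨X⟩]` and `ran δ_{X:B} = ker Θ`, where `Θ = id − ρ` with `ρ`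
the cyclic rotation on monomials. -/
theorem cyclicDer_exact_sequence
    {B A : Type} [Ring B] [Algebra ℂ B] [Ring A] [Algebra ℂ A]
    (ι : B →ₐ[ℂ] A) (X : A) (hfree : IsFreeProduct ι X)
    (D : A →ₗ[ℂ] A ⊗[ℂ] A)
    (hD : ∀ p q : A, D (p * q) = (p ⊗ₜ[ℂ] (1 : A)) * D q + D p * ((1 : A) ⊗ₜ[ℂ] q))
    (hDX : D X = (1 : A) ⊗ₜ[ℂ] (1 : A))
    (hDB : ∀ b : B, D (ι b) = 0)
    (ρ : A →ₗ[ℂ] A)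
    (hρ0 : ∀ b0 : B, ρ (mono ι X b0 []) = mono ι X b0 [])
    (hρ : ∀ (b0 b1 : B) (bs : List B),
      ρ (mono ι X b0 (b1 :: bs)) = mono ι X b1 bs * X * ι b0) :
    LinearMap.ker (cyclicDer D) =
        LinearMap.range ι.toLinearMap ⊔
          Submodule.span ℂ {x : A | ∃ p q : A, x = p * q - q * p} ∧
      LinearMap.range (cyclicDer D) = LinearMap.ker (LinearMap.id - ρ) := by
  classical
  obtain ⟨Ψ, ⟨hΨι, hΨX'⟩, -⟩ :=
    hfree (Polynomial A) ((Polynomial.CAlgHom).comp ι) (Polynomial.C X * Polynomial.X)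
  have hΨb : ∀ b : B, Ψ (ι b) = Polynomial.C (ι b) := by
    intro b
    have h := AlgHom.congr_fun hΨι b
    simpa [AlgHom.comp_apply, Polynomial.CAlgHom] using h
  constructor
  · apply le_antisymm
    · intro a ha
      rw [LinearMap.mem_ker] at ha
      have hNa : numOp X D a ∈ Submodule.span ℂ {x : A | ∃ p q : A, x = p * q - q * p} := by
        have h := N_sub_mem X D a
        rw [ha, mul_zero, sub_zero] at h
        exact h
      have hdec := decomp ι X Ψ hΨb hΨX' hfree a
      rw [← hdec]
      refine Submodule.sum_mem _ ?_
      intro n _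
      rcases Nat.eq_zero_or_pos n with hn | hn
      · subst hn
        exact Submodule.mem_sup_left (P0_range ι X Ψ hΨb hΨX' hfree a)
      · apply Submodule.mem_sup_right
        have h1 := P_comm_stable ι X Ψ hΨb hΨX' n _ hNa
        rw [PN ι X D Ψ hΨb hΨX' hfree hD hDX hDB n a] at h1
        have hne : (n : ℂ) ≠ 0 := Nat.cast_ne_zero.2 hn.ne'
        have h3 : P Ψ n a = (n : ℂ)⁻¹ • ((n : ℂ) • P Ψ n a) := by
          rw [smul_smul, inv_mul_cancel₀ hne, one_smul]
        rw [h3]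
        exact Submodule.smul_mem _ _ h1
    · refine sup_le ?_ ?_
      · rintro x ⟨b, rfl⟩
        rw [LinearMap.mem_ker]
        show cyclicDer D (ι b) = 0
        rw [cyclicDer_eq, hDB b]
        simp
      · rw [Submodule.span_le]
        rintro x ⟨p, q, rfl⟩
        rw [SetLike.mem_coe, LinearMap.mem_ker, map_sub, delta_mul_comm D hD p q, sub_self]
  · apply le_antisymm
    · rintro x ⟨a, rfl⟩
      rw [LinearMap.mem_ker, LinearMap.sub_apply, LinearMap.id_apply,
        rho_delta ι X D ρ hfree hD hDX hDB hρ0 hρ a, sub_self]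
    · intro v hv
      rw [LinearMap.mem_ker, LinearMap.sub_apply, LinearMap.id_apply, sub_eq_zero] at hv
      have hdec := decomp ι X Ψ hΨb hΨX' hfree v
      rw [← hdec]
      refine Submodule.sum_mem _ ?_
      intro n _
      have hfix : ρ (P Ψ n v) = P Ψ n v := by
        rw [← P_rho ι X ρ Ψ hΨb hΨX' hfree hρ0 hρ n v, ← hv]
      have hfixpow : ∀ i : ℕ, (ρ ^ i) (P Ψ n v) = P Ψ n v := by
        intro i
        induction i with
        | zero => simp
        | succ k IH => rw [pow_succ, Module.End.mul_apply, hfix, IH]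
      have h2 : cyclicDer D (X * P Ψ n v) = ((n + 1 : ℕ) : ℂ) • P Ψ n v := by
        rw [R2n ι X D ρ Ψ hΨb hΨX' hfree hD hDX hDB hρ n v]
        rw [Finset.sum_congr rfl fun i _ => hfixpow i, Finset.sum_const, Finset.card_range,
          Nat.cast_smul_eq_nsmul]
      rw [LinearMap.mem_range]
      refine ⟨((n + 1 : ℕ) : ℂ)⁻¹ • (X * P Ψ n v), ?_⟩
      rw [map_smul, h2, smul_smul,
        inv_mul_cancel₀ (Nat.cast_ne_zero.2 (Nat.succ_ne_zero n)), one_smul]
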